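/- Let R be a commutative ring and r₁, r₂ ∈ R^* units with r₁ + r₂ ∈ R^*. Then in K^M_2(R[ε]) one has 2·{1 + r₁·ε, 1 + r₂·ε} = 0. -/

import Mathlib

open TrivSqZeroExt

/-- The relations defining the Milnor K-group of a commutative ring `S`:
multilinearity relations and Steinberg relations (a generator `r₁ ⊗ … ⊗ r_n` with some
pair of consecutive entries summing to `1`). -/
def milnorRelSet (S : Type*) [CommRing S] (n : ℕ) : Set (FreeAbelianGroup (Fin n → Sˣ)) :=
  {x | ∃ (f : Fin n → Sˣ) (i : Fin n) (u v : Sˣ),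
      x = FreeAbelianGroup.of (Function.update f i (u * v))
        - FreeAbelianGroup.of (Function.update f i u)
        - FreeAbelianGroup.of (Function.update f i v)} ∪
  {x | ∃ (f : Fin n → Sˣ) (i j : Fin n), (i : ℕ) + 1 = (j : ℕ) ∧
      ((f i : S) + (f j : S) = 1) ∧ x = FreeAbelianGroup.of f}

/-- The `n`-th Milnor K-group of a commutative ring `S`: the quotient of `(Sˣ)^{⊗ n}`
(presented as the free abelian group on `n`-tuples of units, modulo multilinearity)
by the Steinberg relations. -/
def MilnorK (S : Type*) [CommRing S] (n : ℕ) : Type _ :=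
  FreeAbelianGroup (Fin n → Sˣ) ⧸ AddSubgroup.closure (milnorRelSet S n)

instance (S : Type*) [CommRing S] (n : ℕ) : AddCommGroup (MilnorK S n) :=
  QuotientAddGroup.Quotient.addCommGroup _

/-- The Milnor symbol `{r₁, …, r_n}`. -/
def milnorSymbol {S : Type*} [CommRing S] {n : ℕ} (f : Fin n → Sˣ) : MilnorK S n :=
  QuotientAddGroup.mk (FreeAbelianGroup.of f)

/-- Functoriality of Milnor K-groups in ring homomorphisms. -/
def MilnorK.map {S T : Type*} [CommRing S] [CommRing T] (φ : S →+* T) (n : ℕ) :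
    MilnorK S n →+ MilnorK T n := by
  refine QuotientAddGroup.lift _
    ((QuotientAddGroup.mk' (AddSubgroup.closure (milnorRelSet T n))).comp
      (FreeAbelianGroup.map (fun f => (Units.map (φ : S →* T)) ∘ f))) ?_
  intro x hx
  revert x hx
  rw [← SetLike.le_def, AddSubgroup.closure_le]
  rintro x (⟨f, i, u, v, rfl⟩ | ⟨f, i, j, hij, hsum, rfl⟩) <;>
    simp only [SetLike.mem_coe, AddMonoidHom.mem_ker, map_sub]
  · show milnorSymbol (Units.map (φ : S →* T) ∘ Function.update f i (u * v))
      - milnorSymbol (Units.map (φ : S →* T) ∘ Function.update f i u)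
      - milnorSymbol (Units.map (φ : S →* T) ∘ Function.update f i v) = (0 : MilnorK T n)
    unfold milnorSymbol
    change ((_ : FreeAbelianGroup (Fin n → Tˣ)) : FreeAbelianGroup (Fin n → Tˣ) ⧸
      AddSubgroup.closure (milnorRelSet T n)) - _ - _ = 0
    rw [← QuotientAddGroup.mk_sub, ← QuotientAddGroup.mk_sub, QuotientAddGroup.eq_zero_iff]
    refine AddSubgroup.subset_closure (Or.inl ⟨Units.map (φ : S →* T) ∘ f, i,
      Units.map (φ : S →* T) u, Units.map (φ : S →* T) v, ?_⟩)
    simp [Function.comp_update]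
  · show milnorSymbol (Units.map (φ : S →* T) ∘ f) = (0 : MilnorK T n)
    unfold milnorSymbol
    change ((_ : FreeAbelianGroup (Fin n → Tˣ)) : FreeAbelianGroup (Fin n → Tˣ) ⧸
      AddSubgroup.closure (milnorRelSet T n)) = 0
    rw [QuotientAddGroup.eq_zero_iff]
    refine AddSubgroup.subset_closure (Or.inr ⟨Units.map (φ : S →* T) ∘ f, i, j, hij, ?_, rfl⟩)
    simp only [Function.comp_apply, Units.coe_map, MonoidHom.coe_coe]
    rw [← map_add, hsum, map_one]

/-- The unit `1 + r·ε` of the dual numbers, with inverse `1 - r·ε`. -/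
def oneAddEps (R : Type*) [CommRing R] (r : R) : (DualNumber R)ˣ where
  val := 1 + inr r
  inv := 1 - inr r
  val_inv := by
    have h : (inr r : DualNumber R) * inr r = 0 := inr_mul_inr R r r
    ring_nf
    simp [pow_two, h]
  inv_val := by
    have h : (inr r : DualNumber R) * inr r = 0 := inr_mul_inr R r r
    ring_nf
    simp [pow_two, h]

/-- The `R`-algebra endomorphism `σ_a` of the dual numbers sending `ε` to `a·ε`. -/
def epsScale (R : Type*) [CommRing R] (a : R) : DualNumber R →+* DualNumber R where
  toFun x := inl x.fst + inr (a * x.snd)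
  map_one' := by simp
  map_mul' x y := by
    ext
    · simp
    · simp [snd_mul, smul_eq_mul, mul_comm, mul_add]
      ring
  map_zero' := by simp
  map_add' x y := by ext <;> simp [mul_add]


section Aux

variable {S : Type*} [CommRing S]

lemma update_fin2_zero (u w x : Sˣ) :
    Function.update ![u, w] (0 : Fin 2) x = ![x, w] := by
  ext i; fin_cases i <;> simp [Function.update]

lemma update_fin2_one (u w x : Sˣ) :
    Function.update ![u, w] (1 : Fin 2) x = ![u, x] := by
  ext i; fin_cases i <;> simp [Function.update]

lemma symb_mul_left (u v w : Sˣ) :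
    milnorSymbol ![u * v, w] = milnorSymbol ![u, w] + milnorSymbol ![v, w] := by
  unfold milnorSymbol
  change ((_ : FreeAbelianGroup (Fin 2 → Sˣ)) : FreeAbelianGroup (Fin 2 → Sˣ) ⧸
    AddSubgroup.closure (milnorRelSet S 2)) = _ + _
  rw [← sub_eq_zero, ← QuotientAddGroup.mk_add, ← QuotientAddGroup.mk_sub,
    QuotientAddGroup.eq_zero_iff]
  refine AddSubgroup.subset_closure (Or.inl ⟨![u, w], 0, u, v, ?_⟩)
  rw [update_fin2_zero, update_fin2_zero, update_fin2_zero]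
  abel

lemma symb_mul_right (u v w : Sˣ) :
    milnorSymbol ![u, v * w] = milnorSymbol ![u, v] + milnorSymbol ![u, w] := by
  unfold milnorSymbol
  change ((_ : FreeAbelianGroup (Fin 2 → Sˣ)) : FreeAbelianGroup (Fin 2 → Sˣ) ⧸
    AddSubgroup.closure (milnorRelSet S 2)) = _ + _
  rw [← sub_eq_zero, ← QuotientAddGroup.mk_add, ← QuotientAddGroup.mk_sub,
    QuotientAddGroup.eq_zero_iff]
  refine AddSubgroup.subset_closure (Or.inl ⟨![u, v], 1, v, w, ?_⟩)
  rw [update_fin2_one, update_fin2_one, update_fin2_one]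
  abel

lemma symb_steinberg (u v : Sˣ) (h : (u : S) + (v : S) = 1) :
    milnorSymbol ![u, v] = 0 := by
  unfold milnorSymbol
  change ((_ : FreeAbelianGroup (Fin 2 → Sˣ)) : FreeAbelianGroup (Fin 2 → Sˣ) ⧸
    AddSubgroup.closure (milnorRelSet S 2)) = 0
  rw [QuotientAddGroup.eq_zero_iff]
  refine AddSubgroup.subset_closure (Or.inr ⟨![u, v], 0, 1, rfl, ?_, rfl⟩)
  simpa using h

lemma symb_one_left (w : Sˣ) : milnorSymbol ![(1 : Sˣ), w] = 0 := by
  have h := symb_mul_left (1 : Sˣ) 1 w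
  rw [mul_one] at h
  exact (add_eq_left.mp h.symm)

lemma symb_one_right (u : Sˣ) : milnorSymbol ![u, (1 : Sˣ)] = 0 := by
  have h := symb_mul_right u (1 : Sˣ) 1
  rw [mul_one] at h
  exact (add_eq_left.mp h.symm)

lemma symb_inv_left (u w : Sˣ) : milnorSymbol ![u⁻¹, w] = -milnorSymbol ![u, w] := by
  have h := symb_mul_left u u⁻¹ w
  rw [mul_inv_cancel u, symb_one_left] at h
  exact eq_neg_of_add_eq_zero_right h.symm

lemma symb_inv_right (u w : Sˣ) : milnorSymbol ![u, w⁻¹] = -milnorSymbol ![u, w] := by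
  have h := symb_mul_right u w w⁻¹
  rw [mul_inv_cancel w, symb_one_right] at h
  exact eq_neg_of_add_eq_zero_right h.symm

lemma oneAddEps_neg (R : Type*) [CommRing R] (r : R) :
    oneAddEps R (-r) = (oneAddEps R r)⁻¹ := by
  refine eq_inv_of_mul_eq_one_left (Units.ext ?_)
  show ((1 : DualNumber R) + inr (-r)) * (1 + inr r) = 1
  have h : (inr (-r) : DualNumber R) * inr r = 0 := inr_mul_inr R (-r) r
  rw [add_mul, mul_add, mul_add, h]
  simp

end Aux


/-- for units `r₁, r₂` of `R` with `r₁ + r₂` a unit,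
`2·{1 + r₁ε, 1 + r₂ε} = 0` in `K^M_2(R[ε])`. -/


theorem stmt_12 (R : Type*) [CommRing R] (r₁ r₂ : Rˣ)
    (h : IsUnit ((r₁ : R) + (r₂ : R))) :
    (2 : ℤ) • milnorSymbol ![oneAddEps R (r₁ : R), oneAddEps R (r₂ : R)]
      = (0 : MilnorK (DualNumber R) 2) := by
  obtain ⟨p, hp⟩ := h
  set A : (DualNumber R)ˣ :=
    Units.map (algebraMap R (DualNumber R)).toMonoidHom (r₂ * p⁻¹) with hA
  set B : (DualNumber R)ˣ :=
    Units.map (algebraMap R (DualNumber R)).toMonoidHom (r₁ * p⁻¹) with hB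
  set E₁ := oneAddEps R (r₁ : R) with hE₁
  set E₂ := oneAddEps R (r₂ : R) with hE₂
  have hpinv : ((r₁ : R) + (r₂ : R)) * ((p⁻¹ : Rˣ) : R) = 1 := by
    rw [← hp]; exact p.mul_inv
  have hab : ((r₂ * p⁻¹ : Rˣ) : R) + ((r₁ * p⁻¹ : Rˣ) : R) = 1 := by
    push_cast
    calc (r₂ : R) * ((p⁻¹ : Rˣ) : R) + (r₁ : R) * ((p⁻¹ : Rˣ) : R)
        = ((r₁ : R) + (r₂ : R)) * ((p⁻¹ : Rˣ) : R) := by ring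
      _ = 1 := hpinv
  have hAB : milnorSymbol ![A, B] = 0 := by
    refine symb_steinberg _ _ ?_
    rw [hA, hB, Units.coe_map, Units.coe_map, RingHom.toMonoidHom_eq_coe,
      MonoidHom.coe_coe, ← map_add, hab, map_one]
  have key : ∀ s₁ s₂ : R, ((r₂ * p⁻¹ : Rˣ) : R) * s₁ + ((r₁ * p⁻¹ : Rˣ) : R) * s₂ = 0 →
      ((A * oneAddEps R s₁ : (DualNumber R)ˣ) : DualNumber R)
        + ((B * oneAddEps R s₂ : (DualNumber R)ˣ) : DualNumber R) = 1 := by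
    intro s₁ s₂ hs
    rw [Units.val_mul, Units.val_mul, hA, hB, Units.coe_map, Units.coe_map]
    show (algebraMap R (DualNumber R)) _ * ((1 : DualNumber R) + inr s₁)
      + (algebraMap R (DualNumber R)) _ * ((1 : DualNumber R) + inr s₂) = 1
    ext
    · simp only [algebraMap_eq_inl, fst_mul, fst_add, fst_one, fst_inl, fst_inr, snd_inl,
        snd_inr, mul_zero, add_zero, mul_one]
      simpa using hab
    · simp only [algebraMap_eq_inl, snd_mul, snd_add, snd_one, snd_inl, snd_inr, fst_inl, fst_add,
        fst_inr, fst_one, fst_mul, smul_eq_mul, smul_zero, mul_zero, zero_mul, add_zero, zero_add,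
        mul_one, one_mul]
      linear_combination hs
  have hzero : ((r₂ * p⁻¹ : Rˣ) : R) * (r₁ : R) + ((r₁ * p⁻¹ : Rˣ) : R) * (-(r₂ : R)) = 0 := by
    push_cast; ring
  have hzero' : ((r₂ * p⁻¹ : Rˣ) : R) * (-(r₁ : R)) + ((r₁ * p⁻¹ : Rˣ) : R) * (r₂ : R) = 0 := by
    push_cast; ring
  have rel1 : milnorSymbol ![A * E₁, B * oneAddEps R (-(r₂ : R))] = 0 :=
    symb_steinberg _ _ (key _ _ hzero)
  have rel2 : milnorSymbol ![A * oneAddEps R (-(r₁ : R)), B * E₂] = 0 :=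
    symb_steinberg _ _ (key _ _ hzero')
  rw [oneAddEps_neg, ← hE₂] at rel1
  rw [oneAddEps_neg, ← hE₁] at rel2
  rw [symb_mul_left, symb_mul_right, symb_mul_right, symb_inv_right, symb_inv_right,
    hAB] at rel1
  rw [symb_mul_left, symb_mul_right, symb_mul_right, symb_inv_left, symb_inv_left,
    hAB] at rel2
  have sum := congrArg₂ (· + ·) rel1 rel2
  simp only [add_zero] at sum
  have h2 : -(2 : ℤ) • milnorSymbol ![E₁, E₂] = 0 := by rw [← sum]; abel
  rw [neg_smul, neg_eq_zero] at h2
  exact h2
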